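/- Let $(M, \mathcal{B})$ be a measurable space, $\nu_\varepsilon, \nu_0$ probability measures on $M$ absolutely continuous with respect to a measure $m$, with densities $\rho_\varepsilon, \rho_0$, and let $R_\varepsilon = \int_M |\rho_\varepsilon - \rho_0|\, dm$. Let $z_\varepsilon : M \to [0, 2L]$ be measurable with $\int_M z_\varepsilon^q\, d\nu_\varepsilon \leq C^q \int_M (\delta_\varepsilon + S_\varepsilon)^q\, d\nu_\varepsilon$ for some measurable $\delta_\varepsilon : M \to [0, 4L]$ and constant $S_\varepsilon \leq L R_\varepsilon + \varepsilon$. Then $\left( \int_M z_\varepsilon^q\, d\nu_0 \right)^{1/q} \leq 24 L e^{2L} \left( \left( \int_M \delta_\varepsilon^q\, d\nu_\varepsilon \right)^{1/q} + R_\varepsilon^{1/q} + \varepsilon \right)$, where one may take $C = 12 e^{2L}$ and $q \geq 1$, $L \geq 1$. -/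

import Mathlib

open MeasureTheory
open scoped ENNReal NNReal

-- real version of (a+b)^(1/p) ≤ a^(1/p) + b^(1/p)
lemma aux_rpow_add {a b p : ℝ} (ha : 0 ≤ a) (hb : 0 ≤ b) (hp : 1 ≤ p) :
    (a + b) ^ (1 / p) ≤ a ^ (1 / p) + b ^ (1 / p) := by
  have hp0 : (0:ℝ) < p := lt_of_lt_of_le one_pos hp
  have h := NNReal.rpow_add_rpow_le_add (a.toNNReal ^ (1/p)) (b.toNNReal ^ (1/p)) hp
  rw [← NNReal.rpow_mul, ← NNReal.rpow_mul, one_div_mul_cancel hp0.ne', NNReal.rpow_one,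
    NNReal.rpow_one] at h
  have h2 := NNReal.coe_le_coe.2 h
  push_cast at h2
  rwa [Real.coe_toNNReal _ ha, Real.coe_toNNReal _ hb] at h2

-- integral transfer for withDensity
lemma aux_withDensity {M : Type*} [MeasurableSpace M] (m : Measure M) (ρ : M → ℝ)
    (hnn : ∀ x, 0 ≤ ρ x) (hm : Measurable ρ) (g : M → ℝ) :
    ∫ x, g x ∂(m.withDensity fun x => ENNReal.ofReal (ρ x)) = ∫ x, ρ x * g x ∂m := by
  have he : (fun x => ENNReal.ofReal (ρ x)) = (fun x => ((fun y => (ρ y).toNNReal) x : ℝ≥0∞)) := rfl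
  rw [he, integral_withDensity_eq_integral_smul hm.real_toNNReal]
  congr 1; ext x
  simp [NNReal.smul_def, Real.coe_toNNReal _ (hnn x)]

theorem transfer_Lq_bound {M : Type*} [MeasurableSpace M] (m : Measure M)
    (ρε ρ0 : M → ℝ) (hρεnn : ∀ x, 0 ≤ ρε x) (hρ0nn : ∀ x, 0 ≤ ρ0 x)
    (hmρε : Measurable ρε) (hmρ0 : Measurable ρ0)
    (νε ν0 : Measure M)
    (hνε : νε = m.withDensity (fun x => ENNReal.ofReal (ρε x)))
    (hν0 : ν0 = m.withDensity (fun x => ENNReal.ofReal (ρ0 x)))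
    (hpε : IsProbabilityMeasure νε) (hp0 : IsProbabilityMeasure ν0)
    (Rε : ℝ) (hR : Rε = ∫ x, |ρε x - ρ0 x| ∂m)
    (L q ε Sε : ℝ) (hL : 1 ≤ L) (hq : 1 ≤ q) (hε : 0 ≤ ε)
    (z δ : M → ℝ) (hzm : Measurable z) (hδm : Measurable δ)
    (hz : ∀ x, z x ∈ Set.Icc 0 (2 * L)) (hδ : ∀ x, δ x ∈ Set.Icc 0 (4 * L))
    (hS0 : 0 ≤ Sε) (hS : Sε ≤ L * Rε + ε)
    (hbound : ∫ x, z x ^ q ∂νε ≤ (12 * Real.exp (2 * L)) ^ q * ∫ x, (δ x + Sε) ^ q ∂νε) :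
    (∫ x, z x ^ q ∂ν0) ^ (1 / q) ≤
      24 * L * Real.exp (2 * L) *
        ((∫ x, δ x ^ q ∂νε) ^ (1 / q) + Rε ^ (1 / q) + ε) := by
  have hq0 : (0:ℝ) < q := lt_of_lt_of_le one_pos hq
  have hiq0 : (0:ℝ) < 1/q := by positivity
  have hiq1 : 1/q ≤ 1 := by rw [div_le_one hq0]; exact hq
  have hL0 : (0:ℝ) < L := lt_of_lt_of_le one_pos hL
  have hE1 : (1:ℝ) ≤ Real.exp (2*L) := Real.one_le_exp (by linarith)
  have hRnn : 0 ≤ Rε := hR ▸ integral_nonneg fun x => abs_nonneg _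
  have hzqm : Measurable fun x => z x ^ q := hzm.pow measurable_const
  have hzq_nn : ∀ x, 0 ≤ z x ^ q := fun x => Real.rpow_nonneg (hz x).1 q
  have hzq_le : ∀ x, z x ^ q ≤ (2*L)^q := fun x => Real.rpow_le_rpow (hz x).1 (hz x).2 hq0.le
  have hδnn : ∀ x, (0:ℝ) ≤ δ x := fun x => (hδ x).1
  -- densities are integrable w.r.t. m
  have hdens : ∀ (ρ : M → ℝ), (∀ x, 0 ≤ ρ x) → Measurable ρ →
      IsProbabilityMeasure (m.withDensity fun x => ENNReal.ofReal (ρ x)) → Integrable ρ m := by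
    intro ρ hnn hmρ hprob
    refine ⟨hmρ.aestronglyMeasurable, ?_⟩
    have h1 : ∫⁻ x, ENNReal.ofReal (ρ x) ∂m = 1 := by
      have h2 := hprob.measure_univ
      rwa [withDensity_apply _ MeasurableSet.univ, setLIntegral_univ] at h2
    rw [hasFiniteIntegral_iff_norm]
    have h3 : ∫⁻ x, ENNReal.ofReal ‖ρ x‖ ∂m = 1 := by
      rw [← h1]; apply lintegral_congr; intro x
      rw [Real.norm_eq_abs, abs_of_nonneg (hnn x)]
    rw [h3]; exact ENNReal.one_lt_top
  have hintρε : Integrable ρε m := hdens ρε hρεnn hmρε (hνε ▸ hpε)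
  have hintρ0 : Integrable ρ0 m := hdens ρ0 hρ0nn hmρ0 (hν0 ▸ hp0)
  have hint_abs : Integrable (fun x => |ρε x - ρ0 x|) m := (hintρε.sub hintρ0).abs
  -- bounded measurable functions are integrable w.r.t. probability measures
  have intb : ∀ (μ : Measure M), IsProbabilityMeasure μ → ∀ (f : M → ℝ), Measurable f →
      ∀ C : ℝ, (∀ x : M, ‖f x‖ ≤ C) → Integrable f μ := by
    intro μ hμ f hf C hC
    exact (integrable_const C).mono' hf.aestronglyMeasurable (ae_of_all _ hC)
  have hint_zq_νε : Integrable (fun x => z x ^ q) νε :=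
    intb νε hpε _ hzqm ((2*L)^q) fun x => by
      rw [Real.norm_eq_abs, abs_of_nonneg (hzq_nn x)]; exact hzq_le x
  have hint_zq_ν0 : Integrable (fun x => z x ^ q) ν0 :=
    intb ν0 hp0 _ hzqm ((2*L)^q) fun x => by
      rw [Real.norm_eq_abs, abs_of_nonneg (hzq_nn x)]; exact hzq_le x
  have hmulint : ∀ (ρ : M → ℝ), (∀ x, 0 ≤ ρ x) → ∀ _hmρ : Measurable ρ,
      Integrable (fun x => z x ^ q) (m.withDensity fun x => ENNReal.ofReal (ρ x)) →
      Integrable (fun x => ρ x * z x ^ q) m := by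
    intro ρ hnn hmρ hint
    have he : (fun x => ENNReal.ofReal (ρ x)) = (fun x => ((fun y => (ρ y).toNNReal) x : ℝ≥0∞)) := rfl
    rw [he] at hint
    have h1 := (integrable_withDensity_iff_integrable_smul hmρ.real_toNNReal
      (g := fun x => z x ^ q)).1 hint
    have h2 : (fun x => (Real.toNNReal (ρ x)) • z x ^ q) = fun x => ρ x * z x ^ q := by
      ext x; simp [NNReal.smul_def, Real.coe_toNNReal _ (hnn x)]
    rwa [h2] at h1
  have hintε : Integrable (fun x => ρε x * z x ^ q) m :=
    hmulint ρε hρεnn hmρε (hνε ▸ hint_zq_νε)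
  have hint0 : Integrable (fun x => ρ0 x * z x ^ q) m :=
    hmulint ρ0 hρ0nn hmρ0 (hν0 ▸ hint_zq_ν0)
  -- Step A
  have stepA : ∫ x, z x ^ q ∂ν0 ≤ ∫ x, z x ^ q ∂νε + (2*L)^q * Rε := by
    rw [hν0, hνε, aux_withDensity m ρ0 hρ0nn hmρ0, aux_withDensity m ρε hρεnn hmρε, hR]
    have h1 : ∫ x, ρ0 x * z x ^ q ∂m
        ≤ ∫ x, (ρε x * z x ^ q + |ρε x - ρ0 x| * (2*L)^q) ∂m := by
      apply integral_mono hint0 (hintε.add (hint_abs.mul_const _))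
      intro x
      have h2 : ρ0 x ≤ ρε x + |ρε x - ρ0 x| := by
        have := neg_abs_le (ρε x - ρ0 x); linarith
      have h3 := mul_le_mul_of_nonneg_right h2 (hzq_nn x)
      have h4 := mul_le_mul_of_nonneg_left (hzq_le x) (abs_nonneg (ρε x - ρ0 x))
      show ρ0 x * z x ^ q ≤ ρε x * z x ^ q + |ρε x - ρ0 x| * (2*L)^q
      nlinarith
    rw [integral_add hintε (hint_abs.mul_const _), integral_mul_const] at h1
    linarith
  -- Minkowski step
  have MinK : (∫ x, (δ x + Sε) ^ q ∂νε) ^ (1/q) ≤ (∫ x, δ x ^ q ∂νε) ^ (1/q) + Sε := by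
    set F : M → ℝ≥0∞ := fun x => ENNReal.ofReal (δ x) with hF
    set G : M → ℝ≥0∞ := fun _ => ENNReal.ofReal Sε with hG
    have hFm : Measurable F := hδm.ennreal_ofReal
    have key := ENNReal.lintegral_Lp_add_le (f := F) (g := G) (μ := νε) hFm.aemeasurable aemeasurable_const hq
    have e1 : ∫ x, (δ x + Sε) ^ q ∂νε = (∫⁻ x, ((F + G) x) ^ q ∂νε).toReal := by
      rw [integral_eq_lintegral_of_nonneg_ae
        (ae_of_all _ fun x => Real.rpow_nonneg (add_nonneg (hδnn x) hS0) q)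
        ((hδm.add_const Sε).pow measurable_const).aestronglyMeasurable]
      congr 1
      apply lintegral_congr; intro x
      simp only [hF, hG, Pi.add_apply]
      rw [← ENNReal.ofReal_add (hδnn x) hS0, ENNReal.ofReal_rpow_of_nonneg (add_nonneg (hδnn x) hS0) hq0.le]
    have e2 : ∫ x, δ x ^ q ∂νε = (∫⁻ x, F x ^ q ∂νε).toReal := by
      rw [integral_eq_lintegral_of_nonneg_ae
        (ae_of_all _ fun x => Real.rpow_nonneg (hδnn x) q)
        ((hδm.pow measurable_const).aestronglyMeasurable)]
      congr 1
      apply lintegral_congr; intro x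
      simp only [hF]
      rw [ENNReal.ofReal_rpow_of_nonneg (hδnn x) hq0.le]
    have e3 : ∫⁻ x, G x ^ q ∂νε = ENNReal.ofReal Sε ^ q := by
      simp [hG, lintegral_const, measure_univ]
    have hFfin : ∫⁻ x, F x ^ q ∂νε ≠ ⊤ := by
      have hle : ∫⁻ x, F x ^ q ∂νε ≤ ∫⁻ _, ENNReal.ofReal ((4*L)^q) ∂νε := by
        apply lintegral_mono; intro x
        simp only [hF]
        rw [ENNReal.ofReal_rpow_of_nonneg (hδnn x) hq0.le]
        exact ENNReal.ofReal_le_ofReal (Real.rpow_le_rpow (hδnn x) (hδ x).2 hq0.le)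
      refine ne_top_of_le_ne_top ?_ hle
      simp [lintegral_const, measure_univ]
    have hGfin : (∫⁻ x, G x ^ q ∂νε) ^ (1/q) ≠ ⊤ := by
      rw [e3]
      exact ENNReal.rpow_ne_top_of_nonneg hiq0.le
        (ENNReal.rpow_ne_top_of_nonneg hq0.le ENNReal.ofReal_ne_top)
    have hRHSfin : (∫⁻ x, F x ^ q ∂νε) ^ (1/q) + (∫⁻ x, G x ^ q ∂νε) ^ (1/q) ≠ ⊤ :=
      ENNReal.add_ne_top.2 ⟨ENNReal.rpow_ne_top_of_nonneg hiq0.le hFfin, hGfin⟩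
    rw [e1, e2, ENNReal.toReal_rpow, ENNReal.toReal_rpow]
    have h5 := ENNReal.toReal_mono hRHSfin key
    rw [ENNReal.toReal_add (ENNReal.rpow_ne_top_of_nonneg hiq0.le hFfin) hGfin, e3,
      ← ENNReal.rpow_mul, mul_one_div_cancel hq0.ne', ENNReal.rpow_one,
      ENNReal.toReal_ofReal hS0] at h5
    exact h5
  -- abbreviations
  set A0 := ∫ x, z x ^ q ∂ν0 with hA0
  set Aε := ∫ x, z x ^ q ∂νε with hAε
  set D := ∫ x, δ x ^ q ∂νε with hD
  set Y := ∫ x, (δ x + Sε) ^ q ∂νε with hY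
  have hA0nn : 0 ≤ A0 := integral_nonneg fun x => hzq_nn x
  have hAεnn : 0 ≤ Aε := integral_nonneg fun x => hzq_nn x
  have hDnn : 0 ≤ D := integral_nonneg fun x => Real.rpow_nonneg (hδnn x) q
  have hYnn : 0 ≤ Y := integral_nonneg fun x => Real.rpow_nonneg (add_nonneg (hδnn x) hS0) q
  have hDqnn : 0 ≤ D ^ (1/q) := Real.rpow_nonneg hDnn _
  have hRqnn : 0 ≤ Rε ^ (1/q) := Real.rpow_nonneg hRnn _
  set C := 12 * Real.exp (2*L) with hC
  have hC0 : 0 < C := by positivity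
  rcases le_or_gt Rε 1 with hR1 | hR1
  · -- Rε ≤ 1
    have hLR : L * Rε ≤ L * Rε ^ (1/q) := by
      rcases eq_or_lt_of_le hRnn with h0 | h0
      · rw [← h0, Real.zero_rpow hiq0.ne']
      · have := Real.rpow_le_rpow_of_exponent_ge h0 hR1 hiq1
        rw [Real.rpow_one] at this
        exact mul_le_mul_of_nonneg_left this hL0.le
    have c1 : A0 ^ (1/q) ≤ (Aε + (2*L)^q * Rε) ^ (1/q) :=
      Real.rpow_le_rpow hA0nn stepA hiq0.le
    have c2 : (Aε + (2*L)^q * Rε) ^ (1/q) ≤ Aε ^ (1/q) + ((2*L)^q * Rε) ^ (1/q) :=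
      aux_rpow_add hAεnn (by positivity) hq
    have c3 : ((2*L)^q * Rε) ^ (1/q) = 2*L * Rε ^ (1/q) := by
      rw [Real.mul_rpow (by positivity) hRnn]
      rw [← Real.rpow_mul (by positivity : (0:ℝ) ≤ 2*L), mul_one_div_cancel hq0.ne',
        Real.rpow_one]
    have c4 : Aε ^ (1/q) ≤ C * Y ^ (1/q) := by
      have h6 : Aε ^ (1/q) ≤ (C^q * Y) ^ (1/q) := Real.rpow_le_rpow hAεnn hbound hiq0.le
      rwa [Real.mul_rpow (by positivity) hYnn,
        ← Real.rpow_mul hC0.le, mul_one_div_cancel hq0.ne', Real.rpow_one] at h6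
    have c5 : Y ^ (1/q) ≤ D ^ (1/q) + Sε := MinK
    have c6 : Sε ≤ L * Rε ^ (1/q) + ε := le_trans hS (by linarith)
    have cc : A0 ^ (1/q) ≤ C * D ^ (1/q) + C * (L * Rε ^ (1/q) + ε) + 2*L * Rε ^ (1/q) := by
      calc A0 ^ (1/q) ≤ Aε ^ (1/q) + ((2*L)^q * Rε) ^ (1/q) := le_trans c1 c2
        _ = Aε ^ (1/q) + 2*L * Rε ^ (1/q) := by rw [c3]
        _ ≤ C * (D ^ (1/q) + Sε) + 2*L * Rε ^ (1/q) := by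
            have := le_trans c4 (mul_le_mul_of_nonneg_left c5 hC0.le); linarith
        _ ≤ C * D ^ (1/q) + C * (L * Rε ^ (1/q) + ε) + 2*L * Rε ^ (1/q) := by
            have := mul_le_mul_of_nonneg_left c6 hC0.le; linarith
    rw [hC] at cc
    nlinarith [mul_nonneg hDqnn (sub_nonneg.2 hE1), mul_nonneg hDqnn hL0.le,
      mul_nonneg hRqnn hL0.le, mul_nonneg (mul_nonneg hRqnn hL0.le) (sub_nonneg.2 hE1),
      mul_nonneg hε hL0.le, mul_nonneg (mul_nonneg hε hL0.le) (sub_nonneg.2 hE1),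
      mul_nonneg hDqnn (mul_nonneg (sub_nonneg.2 hL) (le_trans zero_le_one hE1)),
      mul_nonneg hε (mul_nonneg (sub_nonneg.2 hL) (le_trans zero_le_one hE1)),
      mul_nonneg hRqnn (mul_nonneg (sub_nonneg.2 hL) (le_trans zero_le_one hE1))]
  · -- 1 < Rε
    have hA0le : A0 ≤ (2*L)^q := by
      have h7 : A0 ≤ ∫ _x, (2*L)^q ∂ν0 :=
        integral_mono hint_zq_ν0 (integrable_const _) fun x => hzq_le x
      rwa [integral_const, probReal_univ, one_smul] at h7
    have c1 : A0 ^ (1/q) ≤ 2*L := by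
      have h8 := Real.rpow_le_rpow hA0nn hA0le hiq0.le
      rwa [← Real.rpow_mul (by positivity : (0:ℝ) ≤ 2*L), mul_one_div_cancel hq0.ne',
        Real.rpow_one] at h8
    have hRq1 : 1 ≤ Rε ^ (1/q) := by
      have := Real.rpow_le_rpow zero_le_one hR1.le hiq0.le
      rwa [Real.one_rpow] at this
    have hE0 : (0:ℝ) < Real.exp (2*L) := Real.exp_pos _
    have e24 : 2*L ≤ 24*L*Real.exp (2*L) :=
      by linarith [mul_nonneg hL0.le (sub_nonneg.2 hE1)]
    have hsum : 1 ≤ D^(1/q) + Rε^(1/q) + ε := by linarith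
    have h9 : 24*L*Real.exp (2*L) * 1 ≤ 24 * L * Real.exp (2*L) * (D^(1/q) + Rε^(1/q) + ε) :=
      mul_le_mul_of_nonneg_left hsum (by positivity)
    rw [mul_one] at h9
    linarith
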